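/- Let q : ℝ → ℝ be continuous and let ε > 0 satisfy |q(t)| ≤ ε⁻² for all t ∈ [0,2π]. Then for all t⁻, t⁺ with 0 ≤ t⁻ < t⁺ ≤ 2π and t⁺ − t⁻ < ε, one has θ_q(t⁻) < θ_q(t⁺) < θ_q(t⁻) + π. -/

import Mathlib

open Real Set Matrix Filter Topology

/-- Sign of a differentiable function just after/before a zero with negative derivative. -/
lemma aux_slope_sign (w : ℝ → ℝ) (s d : ℝ) (hd : HasDerivAt w d s) (h0 : w s = 0)
    (hneg : d < 0) :
    (∀ᶠ t in nhdsWithin s (Ioi s), w t < 0) ∧ (∀ᶠ t in nhdsWithin s (Iio s), 0 < w t) := by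
  have hs := hasDerivAt_iff_tendsto_slope.1 hd
  have hev : ∀ᶠ t in nhdsWithin s {s}ᶜ, slope w s t < 0 := hs.eventually_lt_const hneg
  constructor
  · have h1 : ∀ᶠ t in nhdsWithin s (Ioi s), slope w s t < 0 :=
      hev.filter_mono (nhdsWithin_mono _ (fun t ht => ne_of_gt ht))
    filter_upwards [h1, self_mem_nhdsWithin] with t h1 h2
    have hts : (0:ℝ) < t - s := by simpa [sub_pos] using h2
    rw [slope_def_field, h0, sub_zero] at h1
    by_contra hc
    push_neg at hc
    exact absurd (div_nonneg hc hts.le) (not_le.2 h1)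
  · have h1 : ∀ᶠ t in nhdsWithin s (Iio s), slope w s t < 0 :=
      hev.filter_mono (nhdsWithin_mono _ (fun t ht => ne_of_lt ht))
    filter_upwards [h1, self_mem_nhdsWithin] with t h1 h2
    have hts : t - s < 0 := by simpa [sub_neg] using h2
    rw [slope_def_field, h0, sub_zero] at h1
    by_contra hc
    push_neg at hc
    have hnn := div_nonneg (neg_nonneg.2 hc) (neg_nonneg.2 hts.le)
    rw [neg_div_neg_eq] at hnn
    exact absurd hnn (not_le.2 h1)

lemma aux_sin_neg {ξ : ℝ} (h1 : -π < ξ) (h2 : ξ < π) (h : Real.sin ξ < 0) : ξ < 0 := by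
  by_contra hc
  push_neg at hc
  exact absurd (Real.sin_nonneg_of_nonneg_of_le_pi hc h2.le) (not_le.2 h)

lemma aux_sin_pos {ξ : ℝ} (h1 : -π < ξ) (h2 : ξ < π) (h : 0 < Real.sin ξ) : 0 < ξ := by
  by_contra hc
  push_neg at hc
  exact absurd (Real.sin_nonpos_of_nonpos_of_neg_pi_le hc h1.le) (not_le.2 h)

/-- A nontrivial solution of `w'' = p w` with `|p| ≤ ε⁻²` cannot have two zeros
at distance `< ε`. -/
lemma zero_spacing (ε : ℝ) (hε : 0 < ε) (p w wd : ℝ → ℝ)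
    (t₁ t₂ : ℝ) (h12 : t₁ < t₂) (hlen : t₂ - t₁ < ε)
    (hw : ∀ t, HasDerivAt w (wd t) t)
    (hwd : ∀ t ∈ Icc t₁ t₂, HasDerivAt wd (p t * w t) t)
    (hp : ∀ t ∈ Icc t₁ t₂, |p t| ≤ (ε ^ 2)⁻¹)
    (h1 : w t₁ = 0) (h2 : w t₂ = 0)
    (t₀ : ℝ) (ht₀ : t₀ ∈ Icc t₁ t₂) (hw0 : w t₀ ≠ 0) : False := by
  have hwc : Continuous w := continuous_iff_continuousAt.2 fun t => (hw t).continuousAt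
  obtain ⟨τ, hτmem, hmax⟩ := isCompact_Icc.exists_isMaxOn ⟨t₁, left_mem_Icc.2 h12.le⟩
    (hwc.abs.continuousOn)
  have hm_pos : 0 < |w τ| := lt_of_lt_of_le (abs_pos.2 hw0) (hmax ht₀)
  have hτ1 : t₁ < τ := by
    rcases lt_or_eq_of_le hτmem.1 with h | h
    · exact h
    · exfalso; rw [← h, h1] at hm_pos; simp at hm_pos
  have hτ2 : τ < t₂ := by
    rcases lt_or_eq_of_le hτmem.2 with h | h
    · exact h
    · exfalso; rw [h, h2] at hm_pos; simp at hm_pos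
  have hwτ : w τ ≠ 0 := abs_pos.1 hm_pos
  have hwdτ : wd τ = 0 := by
    have hsqmax : IsMaxOn (fun t => (w t) ^ 2) (Icc t₁ t₂) τ := by
      intro x hx
      simp only [Set.mem_setOf_eq]
      calc (w x) ^ 2 = |w x| ^ 2 := (sq_abs _).symm
        _ ≤ |w τ| ^ 2 := by
            have := hmax hx
            exact pow_le_pow_left₀ (abs_nonneg _) this 2
        _ = (w τ) ^ 2 := sq_abs _
    have hloc : IsLocalMax (fun t => (w t) ^ 2) τ := hsqmax.isLocalMax (Icc_mem_nhds hτ1 hτ2)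
    have hz := hloc.hasDerivAt_eq_zero ((hw τ).pow 2)
    norm_num at hz
    rcases hz with h | h
    · exact absurd h hwτ
    · exact h
  set K := (ε ^ 2)⁻¹ * |w τ| with hK
  have hIccSub : Icc t₁ τ ⊆ Icc t₁ t₂ := Icc_subset_Icc le_rfl hτ2.le
  have hbound : ∀ s ∈ Icc t₁ τ, |wd s| ≤ K * (τ - s) := by
    intro s hs
    have h := Convex.norm_image_sub_le_of_norm_hasDerivWithin_le
      (f := wd) (f' := fun t => p t * w t) (s := Icc t₁ τ) (C := K) (x := τ) (y := s)
      (fun x hx => (hwd x (hIccSub hx)).hasDerivWithinAt)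
      (fun x hx => by
        rw [Real.norm_eq_abs, abs_mul]
        exact mul_le_mul (hp x (hIccSub hx)) (hmax (hIccSub hx)) (abs_nonneg _)
          (inv_nonneg.2 (sq_nonneg ε)))
      (convex_Icc _ _) (right_mem_Icc.2 hτ1.le) hs
    calc |wd s| = ‖wd s - wd τ‖ := by rw [hwdτ, sub_zero, Real.norm_eq_abs]
      _ ≤ K * ‖s - τ‖ := h
      _ = K * (τ - s) := by
          rw [Real.norm_eq_abs, abs_of_nonpos (by linarith [hs.2])]; ring
  have hu : ∀ s : ℝ, HasDerivAt (fun t => w t + K * (τ - t) ^ 2 / 2) (wd s - K * (τ - s)) s := by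
    intro s
    have hq : HasDerivAt (fun t : ℝ => K * (τ - t) ^ 2 / 2)
        (K * ((2 : ℕ) * (τ - s) ^ 1 * (0 - 1)) / 2) s :=
      ((((hasDerivAt_const s τ).sub (hasDerivAt_id s)).pow 2).const_mul K).div_const 2
    have h := (hw s).add hq
    refine h.congr_deriv ?_
    push_cast
    ring
  have hv : ∀ s : ℝ, HasDerivAt (fun t => w t - K * (τ - t) ^ 2 / 2) (wd s + K * (τ - s)) s := by
    intro s
    have hq : HasDerivAt (fun t : ℝ => K * (τ - t) ^ 2 / 2)
        (K * ((2 : ℕ) * (τ - s) ^ 1 * (0 - 1)) / 2) s :=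
      ((((hasDerivAt_const s τ).sub (hasDerivAt_id s)).pow 2).const_mul K).div_const 2
    have h := (hw s).sub hq
    refine h.congr_deriv ?_
    push_cast
    ring
  have hanti : AntitoneOn (fun t => w t + K * (τ - t) ^ 2 / 2) (Icc t₁ τ) := by
    apply antitoneOn_of_deriv_nonpos (convex_Icc _ _)
    · exact (continuous_iff_continuousAt.2 fun s => (hu s).continuousAt).continuousOn
    · intro x _; exact ((hu x).differentiableAt).differentiableWithinAt
    · intro x hx
      rw [(hu x).deriv]
      rw [interior_Icc] at hx
      have hb := hbound x ⟨hx.1.le, hx.2.le⟩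
      linarith [(abs_le.1 hb).2]
  have hmono : MonotoneOn (fun t => w t - K * (τ - t) ^ 2 / 2) (Icc t₁ τ) := by
    apply monotoneOn_of_deriv_nonneg (convex_Icc _ _)
    · exact (continuous_iff_continuousAt.2 fun s => (hv s).continuousAt).continuousOn
    · intro x _; exact ((hv x).differentiableAt).differentiableWithinAt
    · intro x hx
      rw [(hv x).deriv]
      rw [interior_Icc] at hx
      have hb := hbound x ⟨hx.1.le, hx.2.le⟩
      linarith [(abs_le.1 hb).1]
  have e1 := hanti (left_mem_Icc.2 hτ1.le) (right_mem_Icc.2 hτ1.le) hτ1.le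
  have e2 := hmono (left_mem_Icc.2 hτ1.le) (right_mem_Icc.2 hτ1.le) hτ1.le
  simp only at e1 e2
  have key : |w τ| ≤ K * (τ - t₁) ^ 2 / 2 := by
    rw [abs_le]
    constructor
    · nlinarith [e2]
    · nlinarith [e1]
  have hsq : (τ - t₁) ^ 2 < ε ^ 2 := by nlinarith
  have hε2 : (0:ℝ) < ε ^ 2 := by positivity
  have hfin : ε ^ 2 * |w τ| ≤ |w τ| * (τ - t₁) ^ 2 / 2 := by
    have h := mul_le_mul_of_nonneg_left key hε2.le
    calc ε ^ 2 * |w τ| ≤ ε ^ 2 * (K * (τ - t₁) ^ 2 / 2) := h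
      _ = |w τ| * (τ - t₁) ^ 2 / 2 := by rw [hK]; field_simp
  linarith [mul_lt_mul_of_pos_left hsq hm_pos, hfin, mul_pos hε2 hm_pos]

/-- Lemma 2.2(a). If `|q| ≤ ε⁻²` on `[0,2π]` then the argument lift
`θ_q` of the first row of the fundamental matrix advances by less than `π` on any
subinterval of length less than `ε`, and it is strictly increasing there. -/
theorem stmt_1 (ε : ℝ) (hε : 0 < ε) (q : ℝ → ℝ) (hq : Continuous q)
    (hqb : ∀ t ∈ Icc (0:ℝ) (2 * π), |q t| ≤ (ε ^ 2)⁻¹)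
    -- `Φ` is the fundamental matrix of the potential `q`:
    (Φ : ℝ → Matrix (Fin 2) (Fin 2) ℝ)
    (hΦ0 : Φ 0 = 1)
    (hΦ : ∀ t : ℝ, ∀ i j, HasDerivAt (fun s => Φ s i j) ((!![0, 1; q t, 0] * Φ t) i j) t)
    -- `θ` is the continuous argument lift of the curve `t ↦ (v₁(t), v₂(t))`,
    -- the first row of `Φ`:
    (θ : ℝ → ℝ) (hθc : ContinuousOn θ (Icc 0 (2 * π))) (hθ0 : θ 0 = 0)
    (hpolar : ∀ t ∈ Icc (0:ℝ) (2 * π),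
      Φ t 0 0 = Real.sqrt ((Φ t 0 0) ^ 2 + (Φ t 0 1) ^ 2) * Real.cos (θ t) ∧
      Φ t 0 1 = Real.sqrt ((Φ t 0 0) ^ 2 + (Φ t 0 1) ^ 2) * Real.sin (θ t)) :
    ∀ tm tp : ℝ, 0 ≤ tm → tm < tp → tp ≤ 2 * π → tp - tm < ε →
      θ tm < θ tp ∧ θ tp < θ tm + π := by
  -- entrywise derivatives
  have hd00 : ∀ t : ℝ, HasDerivAt (fun s => Φ s 0 0) (Φ t 1 0) t := by
    intro t
    have h := hΦ t 0 0
    simpa [Matrix.mul_apply, Fin.sum_univ_two] using h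
  have hd01 : ∀ t : ℝ, HasDerivAt (fun s => Φ s 0 1) (Φ t 1 1) t := by
    intro t
    have h := hΦ t 0 1
    simpa [Matrix.mul_apply, Fin.sum_univ_two] using h
  have hd10 : ∀ t : ℝ, HasDerivAt (fun s => Φ s 1 0) (q t * Φ t 0 0) t := by
    intro t
    have h := hΦ t 1 0
    simpa [Matrix.mul_apply, Fin.sum_univ_two] using h
  have hd11 : ∀ t : ℝ, HasDerivAt (fun s => Φ s 1 1) (q t * Φ t 0 1) t := by
    intro t
    have h := hΦ t 1 1
    simpa [Matrix.mul_apply, Fin.sum_univ_two] using h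
  -- the Wronskian is constant equal to 1
  have hdet : ∀ t : ℝ, Φ t 0 0 * Φ t 1 1 - Φ t 0 1 * Φ t 1 0 = 1 := by
    have hgd : ∀ t : ℝ,
        HasDerivAt (fun s => Φ s 0 0 * Φ s 1 1 - Φ s 0 1 * Φ s 1 0) 0 t := by
      intro t
      have h := ((hd00 t).mul (hd11 t)).sub ((hd01 t).mul (hd10 t))
      refine h.congr_deriv ?_
      ring
    intro t
    have h := is_const_of_deriv_eq_zero
      (f := fun s => Φ s 0 0 * Φ s 1 1 - Φ s 0 1 * Φ s 1 0)
      (fun x => (hgd x).differentiableAt) (fun x => (hgd x).deriv) t 0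
    simp only [hΦ0] at h
    rw [h]
    norm_num [Matrix.one_apply]
  -- the first row never vanishes
  have hr2 : ∀ t : ℝ, 0 < Φ t 0 0 ^ 2 + Φ t 0 1 ^ 2 := by
    intro t
    by_contra hc
    push_neg at hc
    have h00 : Φ t 0 0 = 0 := by
      have h : Φ t 0 0 ^ 2 = 0 :=
        le_antisymm (by nlinarith [sq_nonneg (Φ t 0 1)]) (sq_nonneg _)
      exact (pow_eq_zero_iff two_ne_zero).1 h
    have h01 : Φ t 0 1 = 0 := by
      have h : Φ t 0 1 ^ 2 = 0 :=
        le_antisymm (by nlinarith [sq_nonneg (Φ t 0 0)]) (sq_nonneg _)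
      exact (pow_eq_zero_iff two_ne_zero).1 h
    have h := hdet t
    rw [h00, h01] at h
    norm_num at h
  have hRpos : ∀ t : ℝ, 0 < Real.sqrt (Φ t 0 0 ^ 2 + Φ t 0 1 ^ 2) :=
    fun t => Real.sqrt_pos.2 (hr2 t)
  intro tm tp h0m hmp hp2 hlen
  have hsub : Icc tm tp ⊆ Icc (0:ℝ) (2 * π) := Icc_subset_Icc h0m hp2
  have htm2 : tm ∈ Icc (0:ℝ) (2 * π) := hsub (left_mem_Icc.2 hmp.le)
  -- the solution vanishing at `tm` in the direction `θ tm`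
  set W : ℝ → ℝ := fun t => Real.sin (θ tm) * Φ t 0 0 - Real.cos (θ tm) * Φ t 0 1 with hWdef
  set Wd : ℝ → ℝ := fun t => Real.sin (θ tm) * Φ t 1 0 - Real.cos (θ tm) * Φ t 1 1 with hWddef
  have hWd : ∀ t : ℝ, HasDerivAt W (Wd t) t :=
    fun t => ((hd00 t).const_mul _).sub ((hd01 t).const_mul _)
  have hWdd : ∀ t : ℝ, HasDerivAt Wd (q t * W t) t := by
    intro t
    have h := ((hd10 t).const_mul (Real.sin (θ tm))).sub ((hd11 t).const_mul (Real.cos (θ tm)))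
    refine h.congr_deriv ?_
    rw [hWdef]
    ring
  have hWpolar : ∀ t ∈ Icc (0:ℝ) (2 * π),
      W t = Real.sqrt (Φ t 0 0 ^ 2 + Φ t 0 1 ^ 2) * Real.sin (θ tm - θ t) := by
    intro t ht
    obtain ⟨hpc, hps⟩ := hpolar t ht
    set R := Real.sqrt (Φ t 0 0 ^ 2 + Φ t 0 1 ^ 2) with hRdef
    rw [hWdef]
    simp only
    rw [Real.sin_sub, hpc, hps]
    ring
  -- at any point where `θ s = θ tm`, `W` vanishes and has negative derivative `-1/r`
  have hWderiv_neg : ∀ s ∈ Icc (0:ℝ) (2 * π), θ s = θ tm → Wd s < 0 := by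
    intro s hs hθs
    obtain ⟨hpc, hps⟩ := hpolar s hs
    rw [hθs] at hpc hps
    have hdet' := hdet s
    have hR : 0 < Real.sqrt (Φ s 0 0 ^ 2 + Φ s 0 1 ^ 2) := hRpos s
    set R := Real.sqrt (Φ s 0 0 ^ 2 + Φ s 0 1 ^ 2) with hRdef
    rw [hpc, hps] at hdet'
    rw [hWddef]
    simp only
    by_contra hc
    push_neg at hc
    nlinarith [mul_nonneg hR.le hc, hdet']
  have hW_zero : ∀ s ∈ Icc (0:ℝ) (2 * π), θ s = θ tm → W s = 0 := by
    intro s hs hθs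
    rw [hWpolar s hs, hθs]
    simp
  -- local crossing behaviour of `θ` at points where `θ s = θ tm`
  have hcross : ∀ s ∈ Icc tm tp, θ s = θ tm →
      (∀ᶠ t in nhdsWithin s (Ioi s), t ∈ Icc (0:ℝ) (2 * π) → θ tm < θ t) ∧
      (∀ᶠ t in nhdsWithin s (Iio s), t ∈ Icc (0:ℝ) (2 * π) → θ t < θ tm) := by
    intro s hs hθs
    have hs2 : s ∈ Icc (0:ℝ) (2 * π) := hsub hs
    obtain ⟨E1, E2⟩ := aux_slope_sign W s (Wd s) (hWd s) (hW_zero s hs2 hθs)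
      (hWderiv_neg s hs2 hθs)
    have hcont : ∀ᶠ t in nhds s, t ∈ Icc (0:ℝ) (2 * π) → |θ t - θ tm| < π := by
      have h1 : Filter.Tendsto θ (nhdsWithin s (Icc (0:ℝ) (2 * π))) (nhds (θ s)) := hθc s hs2
      have h2 : ∀ᶠ t in nhdsWithin s (Icc (0:ℝ) (2 * π)), θ t ∈ Metric.ball (θ s) π :=
        h1 (Metric.ball_mem_nhds (θ s) Real.pi_pos)
      rw [eventually_nhdsWithin_iff] at h2
      filter_upwards [h2] with t ht hmem
      have := ht hmem
      rw [Metric.mem_ball, Real.dist_eq, hθs] at this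
      exact this
    constructor
    · filter_upwards [E1, hcont.filter_mono nhdsWithin_le_nhds] with t h1 h2 hmem
      have hb := abs_lt.1 (h2 hmem)
      have hWp := hWpolar t hmem
      have hRt : 0 < Real.sqrt (Φ t 0 0 ^ 2 + Φ t 0 1 ^ 2) := hRpos t
      have hsin : Real.sin (θ tm - θ t) < 0 := by
        by_contra hc
        push_neg at hc
        rw [hWp] at h1
        nlinarith [mul_nonneg hRt.le hc]
      have := aux_sin_neg (ξ := θ tm - θ t) (by linarith) (by linarith) hsin
      linarith
    · filter_upwards [E2, hcont.filter_mono nhdsWithin_le_nhds] with t h1 h2 hmem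
      have hb := abs_lt.1 (h2 hmem)
      have hWp := hWpolar t hmem
      have hRt : 0 < Real.sqrt (Φ t 0 0 ^ 2 + Φ t 0 1 ^ 2) := hRpos t
      have hsin : 0 < Real.sin (θ tm - θ t) := by
        by_contra hc
        push_neg at hc
        rw [hWp] at h1
        nlinarith [mul_nonpos_of_nonneg_of_nonpos hRt.le hc]
      have := aux_sin_pos (ξ := θ tm - θ t) (by linarith) (by linarith) hsin
      linarith
  -- Part 1: θ is strictly increasing
  have part1 : θ tm < θ tp := by
    by_contra hcon
    push_neg at hcon
    set Z := {t : ℝ | t ∈ Ioc tm tp ∧ θ t ≤ θ tm} with hZ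
    have hZne : Z.Nonempty := ⟨tp, ⟨⟨hmp, le_refl tp⟩, hcon⟩⟩
    have hZbdd : BddBelow Z := ⟨tm, fun t ht => ht.1.1.le⟩
    have hsmem : sInf Z ∈ closure Z := csInf_mem_closure hZne hZbdd
    have hCclosed : IsClosed (Icc tm tp ∩ θ ⁻¹' Iic (θ tm)) :=
      (hθc.mono hsub).preimage_isClosed_of_isClosed isClosed_Icc isClosed_Iic
    have hZC : Z ⊆ Icc tm tp ∩ θ ⁻¹' Iic (θ tm) := fun t ht => ⟨⟨ht.1.1.le, ht.1.2⟩, ht.2⟩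
    have hsC : sInf Z ∈ Icc tm tp ∩ θ ⁻¹' Iic (θ tm) := closure_minimal hZC hCclosed hsmem
    have hcross_tm := hcross tm (left_mem_Icc.2 hmp.le) rfl
    have h_tm_lt : tm < sInf Z := by
      rcases lt_or_eq_of_le (le_csInf hZne (fun t ht => ht.1.1.le)) with h | h
      · exact h
      · exfalso
        have hne : (nhdsWithin tm Z).NeBot := mem_closure_iff_nhdsWithin_neBot.1 (h ▸ hsmem)
        have hmono : nhdsWithin tm Z ≤ nhdsWithin tm (Ioi tm) :=
          nhdsWithin_mono _ (fun t ht => ht.1.1)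
        have hE := (hcross_tm.1).filter_mono hmono
        obtain ⟨t, h1, h2⟩ := (hE.and (eventually_mem_nhdsWithin)).exists
        exact absurd (h1 (hsub ⟨h2.1.1.le, h2.1.2⟩)) (not_lt.2 h2.2)
    have hsIcc : sInf Z ∈ Icc tm tp := hsC.1
    have hsle : θ (sInf Z) ≤ θ tm := hsC.2
    have hooSub : Ioo tm (sInf Z) ⊆ Icc (0:ℝ) (2 * π) :=
      fun t ht => hsub ⟨ht.1.le, le_trans ht.2.le hsIcc.2⟩
    have hgt : ∀ t ∈ Ioo tm (sInf Z), θ tm < θ t := by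
      intro t ht
      by_contra hc
      push_neg at hc
      exact (notMem_of_lt_csInf ht.2 hZbdd) ⟨⟨ht.1, le_trans ht.2.le hsIcc.2⟩, hc⟩
    have hθs_ge : θ tm ≤ θ (sInf Z) := by
      have hcl : sInf Z ∈ closure (Ioo tm (sInf Z)) := by
        rw [closure_Ioo (ne_of_lt h_tm_lt)]
        exact right_mem_Icc.2 h_tm_lt.le
      have hne : (nhdsWithin (sInf Z) (Ioo tm (sInf Z))).NeBot :=
        mem_closure_iff_nhdsWithin_neBot.1 hcl
      have htend : Filter.Tendsto θ (nhdsWithin (sInf Z) (Ioo tm (sInf Z))) (nhds (θ (sInf Z))) :=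
        (hθc (sInf Z) (hsub hsIcc)).mono_left (nhdsWithin_mono _ hooSub)
      exact ge_of_tendsto htend (eventually_mem_nhdsWithin.mono (fun t ht => (hgt t ht).le))
    have hθs : θ (sInf Z) = θ tm := le_antisymm hsle hθs_ge
    have hcrossS := (hcross (sInf Z) hsIcc hθs).2
    have hIooMem : Ioo tm (sInf Z) ∈ nhdsWithin (sInf Z) (Iio (sInf Z)) :=
      Ioo_mem_nhdsLT_of_mem ⟨h_tm_lt, le_refl _⟩
    obtain ⟨t, h1, h2⟩ := (hcrossS.and (eventually_of_mem hIooMem (fun t ht => ht))).exists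
    exact absurd (hgt t h2) (not_lt.2 (h1 (hooSub h2)).le)
  -- Part 2: θ advances less than π
  have part2 : θ tp < θ tm + π := by
    by_contra hcon
    push_neg at hcon
    obtain ⟨t₂, ht₂mem, ht₂⟩ := intermediate_value_Icc hmp.le (hθc.mono hsub)
      ⟨by linarith [Real.pi_pos], hcon⟩
    have htm_lt_t₂ : tm < t₂ := by
      rcases lt_or_eq_of_le ht₂mem.1 with h | h
      · exact h
      · exfalso
        rw [← h] at ht₂
        linarith [Real.pi_pos]
    have ht₂2 : t₂ ∈ Icc (0:ℝ) (2 * π) := hsub ht₂mem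
    have hW_t₂ : W t₂ = 0 := by
      rw [hWpolar t₂ ht₂2, ht₂]
      have h : θ tm - (θ tm + π) = -π := by ring
      rw [h, Real.sin_neg, Real.sin_pi]
      ring
    have hW_tm : W tm = 0 := hW_zero tm htm2 rfl
    have hW0ev : ∀ᶠ t in nhdsWithin tm (Ioi tm), W t < 0 :=
      (aux_slope_sign W tm (Wd tm) (hWd tm) hW_tm (hWderiv_neg tm htm2 rfl)).1
    have hIooMem : Ioo tm t₂ ∈ nhdsWithin tm (Ioi tm) :=
      Ioo_mem_nhdsGT_of_mem ⟨le_refl tm, htm_lt_t₂⟩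
    obtain ⟨t₀, h1, h2⟩ := (hW0ev.and (eventually_of_mem hIooMem (fun t ht => ht))).exists
    exact zero_spacing ε hε q W Wd tm t₂ htm_lt_t₂ (by linarith [ht₂mem.2])
      hWd (fun t _ => hWdd t)
      (fun t ht => hqb t (hsub ⟨ht.1, le_trans ht.2 ht₂mem.2⟩))
      hW_tm hW_t₂ t₀ ⟨h2.1.le, h2.2.le⟩ (ne_of_lt h1)
  exact ⟨part1, part2⟩
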